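/- Let A, B ∈ ℍ be similar quaternions (same real part and same norm) that do not commute. Then the quadratic quaternionic equation λ² − (A+B)λ + AB = 0 has the unique solution λ = B. -/

import Mathlib

theorem stmt_7 (A B : Quaternion ℝ) (hre : A.re = B.re) (hnorm : ‖A‖ = ‖B‖)
    (hcomm : A * B ≠ B * A) (l : Quaternion ℝ) :
    l ^ 2 - (A + B) * l + A * B = 0 ↔ l = B := by
  constructor
  · intro h
    set x : Quaternion ℝ := l - B with hx
    set a : Quaternion ℝ := A - (A.re : Quaternion ℝ) with hadef
    set b : Quaternion ℝ := B - (B.re : Quaternion ℝ) with hbdef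
    -- x*x = a*x - x*b
    have key1 : x * x = a * x - x * b := by
      have h3 : x * x - (a * x - x * b) -
          ((A.re : Quaternion ℝ) * x - x * (B.re : Quaternion ℝ)) =
          l ^ 2 - (A + B) * l + A * B := by
        rw [hx, hadef, hbdef]; noncomm_ring
      have hc : (A.re : Quaternion ℝ) * x - x * (B.re : Quaternion ℝ) = 0 := by
        rw [hre, Quaternion.coe_commutes, sub_self]
      rw [hc, sub_zero, h] at h3
      exact sub_eq_zero.mp h3
    -- a = A.im, b = B.im
    have haim : a = A.im := by
      rw [hadef]; ext <;> simp
    have hbim : b = B.im := by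
      rw [hbdef]; ext <;> simp
    -- a*a = b*b = real scalar
    have hnsq : Quaternion.normSq A = Quaternion.normSq B := by
      rw [Quaternion.normSq_eq_norm_mul_self, Quaternion.normSq_eq_norm_mul_self, hnorm]
    have hnsqim : Quaternion.normSq A.im = Quaternion.normSq B.im := by
      simp only [Quaternion.normSq_def'] at hnsq ⊢
      simp only [Quaternion.re_im, Quaternion.imI_im, Quaternion.imJ_im,
        Quaternion.imK_im]
      rw [hre] at hnsq
      linarith
    have ha2 : a * a = ((-Quaternion.normSq A.im : ℝ) : Quaternion ℝ) := by
      rw [haim, ← sq, Quaternion.im_sq]; push_cast; ring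
    have hb2 : b * b = ((-Quaternion.normSq A.im : ℝ) : Quaternion ℝ) := by
      rw [hbim, ← sq, Quaternion.im_sq, hnsqim]; push_cast; ring
    -- key algebraic step
    have hstep : x * a * x - (x * x) * b = a * (x * x) - x * b * x := by
      calc x * a * x - (x * x) * b = x * (a * x - x * b) := by noncomm_ring
        _ = x * (x * x) := by rw [key1]
        _ = (x * x) * x := by noncomm_ring
        _ = (a * x - x * b) * x := by rw [key1]
        _ = a * (x * x) - x * b * x := by noncomm_ring
    rw [key1] at hstep
    have e5 : x * ((a + b) * x) - ((a * a) * x - x * (b * b)) =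
        (x * a * x - (a * x - x * b) * b) - (a * (a * x - x * b) - x * b * x) := by
      noncomm_ring
    rw [hstep, sub_self] at e5
    have e7 : (a * a) * x - x * (b * b) = 0 := by
      rw [ha2, hb2, Quaternion.coe_commutes, sub_self]
    rw [e7, sub_zero] at e5
    rcases mul_eq_zero.mp e5 with hx0 | h2
    · exact sub_eq_zero.mp hx0
    rcases mul_eq_zero.mp h2 with hab | hx0
    · exfalso
      rw [hadef, hbdef] at hab
      have hAB : B = (A.re : Quaternion ℝ) + (B.re : Quaternion ℝ) - A := by
        have h0 : B - ((A.re : Quaternion ℝ) + (B.re : Quaternion ℝ) - A) =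
            A - (A.re : Quaternion ℝ) + (B - (B.re : Quaternion ℝ)) := by abel
        rw [hab] at h0
        exact sub_eq_zero.mp h0
      apply hcomm
      rw [hAB, mul_sub, sub_mul, mul_add, add_mul, Quaternion.coe_commutes,
        Quaternion.coe_commutes]
    · exact sub_eq_zero.mp hx0
  · intro h; subst h; noncomm_ring
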